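/- arXiv:1105.0865 — 3 statements merged into one kernel-verified Lean document; each statement's English description precedes it below -/
import Mathlib

section
/- Let G be a topological group whose underlying topological space is Noetherian (every descending chain of closed subsets stabilizes), and let M ⊆ G be a submonoid whose underlying set is closed in G. Then M is a subgroup of G: for every m ∈ M also m⁻¹ ∈ M. -/
open Pointwise


/-- Let `G` be a topological group whose underlying space is
Noetherian, and let `M ⊆ G` be a closed submonoid. Then `M` is a subgroup:
it is closed under inversion. -/
theorem closed_submonoid_of_noetherian_topological_group_is_subgroup
    {G : Type*} [Group G] [TopologicalSpace G] [IsTopologicalGroup G]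
    [TopologicalSpace.NoetherianSpace G]
    (M : Set G) (hclosed : IsClosed M)
    (hone : (1 : G) ∈ M)
    (hmul : ∀ a ∈ M, ∀ b ∈ M, a * b ∈ M) :
    ∀ m ∈ M, m⁻¹ ∈ M := by
  intro m hm
  -- the descending chain of closed sets mⁿ • M
  set C : ℕ → TopologicalSpace.Closeds G :=
    fun n => ⟨(m ^ n) • M, hclosed.smul (m ^ n)⟩ with hC
  have hdesc : ∀ n, C (n + 1) ≤ C n := by
    intro n x hx
    obtain ⟨y, hy, rfl⟩ := hx
    refine ⟨m * y, hmul m hm y hy, ?_⟩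
    simp [pow_succ, mul_smul, smul_smul, mul_assoc]
  obtain ⟨s, ⟨n, rfl⟩, hmin⟩ :=
    (wellFounded_lt (α := TopologicalSpace.Closeds G)).has_min
      (Set.range C) (Set.range_nonempty C)
  have heq : C (n + 1) = C n :=
    le_antisymm (hdesc n) <| by
      by_contra h
      exact hmin (C (n + 1)) ⟨n + 1, rfl⟩ (lt_of_le_of_ne (hdesc n) (fun e => h e.ge))
  -- m^n ∈ C n = C (n+1), so m^n = m^(n+1) * x for some x ∈ M
  have hmem : m ^ n ∈ (C (n + 1) : Set G) := by
    rw [heq]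
    exact ⟨1, hone, by simp⟩
  obtain ⟨x, hx, hxe⟩ := hmem
  have h1 : m ^ n * (m * x) = m ^ n * 1 := by
    have : m ^ (n + 1) * x = m ^ n := hxe
    rw [pow_succ, mul_assoc] at this
    simpa using this
  have : m⁻¹ = x := inv_eq_of_mul_eq_one_right (mul_left_cancel h1)
  rwa [this]
end

section
/- Let k be a field, let Q be a quiver with finitely many vertices and finitely many edges, and let T₁, T₂ be two representations of Q in finite-dimensional k-vector spaces: for each vertex p finite-dimensional spaces T₁(p), T₂(p), and for each edge f : p → p' linear maps T₁(f) : T₁(p) → T₁(p') and T₂(f) : T₂(p) → T₂(p'). Let Hom(T₁,T₂) be the k-vector space of families (φ_p)_p with φ_p : T₁(p) → T₂(p) linear and φ_{p'} ∘ T₁(f) = T₂(f) ∘ φ_p for every edge f : p → p'. Let P be the quotient of the direct sum ⨁_p T₁(p) ⊗ (T₂(p))* by the subspace spanned by all elements (T₁(f)ω) ⊗ γ − ω ⊗ (γ ∘ T₂(f)), where f : p → p' is an edge, ω ∈ T₁(p), γ ∈ (T₂(p'))* (the first summand in the component of p', the second in the component of p). Then the k-linear map Ψ : P → (Hom(T₁,T₂))*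 sending the class of ω ⊗ γ in the p-component to the functional φ ↦ γ(φ_p(ω)) is well defined and is an isomorphism of k-vector spaces. -/
open TensorProduct

section

variable {k : Type*} [Field k]
variable {V E : Type*} [Fintype V] [Fintype E] [DecidableEq V]
variable (src tgt : E → V)
variable (T₁ T₂ : V → Type*)
variable [∀ p, AddCommGroup (T₁ p)] [∀ p, Module k (T₁ p)]
variable [∀ p, AddCommGroup (T₂ p)] [∀ p, Module k (T₂ p)]
variable (T₁f : ∀ e : E, T₁ (src e) →ₗ[k] T₁ (tgt e))
variable (T₂f : ∀ e : E, T₂ (src e) →ₗ[k] T₂ (tgt e))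

/-- We record once and for all that the dual spaces are additive groups (this is the
usual instance; fixing it here keeps all occurrences definitionally aligned). -/
noncomputable local instance (priority := 2000) dualACM (p : V) :
    AddCommMonoid (Module.Dual k (T₂ p)) :=
  (inferInstance : AddCommGroup (Module.Dual k (T₂ p))).toAddCommMonoid

/-- `Hom(T₁, T₂)`: the space of families `(φ_p)_p` of linear maps commuting with all
the edge maps. -/
def homRep : Submodule k (∀ p : V, T₁ p →ₗ[k] T₂ p) where
  carrier := {φ | ∀ e : E, (φ (tgt e)).comp (T₁f e) = (T₂f e).comp (φ (src e))}
  add_mem' := by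
    intro φ ψ hφ hψ e
    simp only [Pi.add_apply, LinearMap.add_comp, LinearMap.comp_add, hφ e, hψ e]
  zero_mem' := by
    intro e
    simp only [Pi.zero_apply, LinearMap.zero_comp, LinearMap.comp_zero]
  smul_mem' := by
    intro c φ hφ e
    simp only [Pi.smul_apply, LinearMap.smul_comp, LinearMap.comp_smul, hφ e]

/-- The subspace of relations inside the direct sum `⨁_p T₁(p) ⊗ (T₂(p))*`
(realized, since `V` is finite, as the product `∀ p, T₁ p ⊗ (T₂ p)*`): it is spanned
by the elements `(T₁(f)ω) ⊗ γ − ω ⊗ (γ ∘ T₂(f))` for edges `f : p → p'`, `ω ∈ T₁(p)`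
and `γ ∈ (T₂(p'))*` (the first summand sitting in the component of `p'`, the second
in the component of `p`). -/
noncomputable def relSub : Submodule k (∀ p : V, T₁ p ⊗[k] Module.Dual k (T₂ p)) :=
  Submodule.span k
    {x | ∃ (e : E) (ω : T₁ (src e)) (γ : Module.Dual k (T₂ (tgt e))),
      x = LinearMap.single k (fun p => T₁ p ⊗[k] Module.Dual k (T₂ p)) (tgt e)
            ((T₁f e ω) ⊗ₜ[k] γ)
        - LinearMap.single k (fun p => T₁ p ⊗[k] Module.Dual k (T₂ p)) (src e)
            (ω ⊗ₜ[k] (γ ∘ₗ T₂f e))}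

section Aux
variable {k : Type*} [Field k]
variable (M N : Type*) [AddCommGroup M] [Module k M] [AddCommGroup N] [Module k N]
variable [FiniteDimensional k M] [FiniteDimensional k N]

/-- The natural isomorphism `M ⊗ N* ≅ (Hom(M,N))*` in finite dimensions. -/
noncomputable def evalTensor :
    M ⊗[k] Module.Dual k N ≃ₗ[k] Module.Dual k (M →ₗ[k] N) :=
  (TensorProduct.congr (Module.evalEquiv k M) (LinearEquiv.refl k (Module.Dual k N))).trans
    ((TensorProduct.dualDistribEquiv k (Module.Dual k M) N).trans
      (LinearEquiv.dualMap (dualTensorHomEquiv k M N).symm))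

theorem evalTensor_apply (m : M) (γ : Module.Dual k N) (f : M →ₗ[k] N) :
    evalTensor M N (m ⊗ₜ[k] γ) f = γ (f m) := by
  have hD : (TensorProduct.dualDistribEquiv k (Module.Dual k M) N
        ((Module.evalEquiv k M m) ⊗ₜ[k] γ) : Module.Dual k M ⊗[k] N →ₗ[k] k)
      = γ.comp ((LinearMap.applyₗ m).comp (dualTensorHomEquiv k M N).toLinearMap) := by
    apply TensorProduct.ext'
    intro δ n
    simp [TensorProduct.dualDistribEquiv, dualTensorHom_apply, mul_comm]
  have : evalTensor M N (m ⊗ₜ[k] γ) f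
      = TensorProduct.dualDistribEquiv k (Module.Dual k M) N
          ((Module.evalEquiv k M m) ⊗ₜ[k] γ) ((dualTensorHomEquiv k M N).symm f) := rfl
  rw [this, hD]
  simp
end Aux

set_option maxHeartbeats 2000000 in
set_option synthInstance.maxHeartbeats 400000 in
/-- Let `k` be a field, `Q` a finite quiver, and `T₁`, `T₂` two
representations of `Q` in finite-dimensional `k`-vector spaces. Let
`P = (⨁_p T₁(p) ⊗ (T₂(p))*) / relations`. Then the map
`Ψ : P → (Hom(T₁,T₂))*`, sending the class of `ω ⊗ γ` (in the `p`-component)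
to the functional `φ ↦ γ(φ_p(ω))`, is well defined and is an isomorphism of
`k`-vector spaces. -/
theorem period_pairing_iso
    [∀ p, FiniteDimensional k (T₁ p)] [∀ p, FiniteDimensional k (T₂ p)] :
    ∃ Ψ : ((∀ p : V, T₁ p ⊗[k] Module.Dual k (T₂ p)) ⧸ relSub src tgt T₁ T₂ T₁f T₂f)
            →ₗ[k] Module.Dual k (homRep src tgt T₁ T₂ T₁f T₂f),
      (∀ (p : V) (ω : T₁ p) (γ : Module.Dual k (T₂ p))
          (φ : homRep src tgt T₁ T₂ T₁f T₂f),
        Ψ (Submodule.Quotient.mk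
            (LinearMap.single k (fun p => T₁ p ⊗[k] Module.Dual k (T₂ p)) p
              (ω ⊗ₜ[k] γ))) φ
          = γ (((φ : ∀ p : V, T₁ p →ₗ[k] T₂ p) p) ω)) ∧
      Function.Bijective Ψ := by
  classical
  -- the difference map whose kernel is `homRep`
  set D : (∀ p : V, T₁ p →ₗ[k] T₂ p) →ₗ[k] (∀ e : E, T₁ (src e) →ₗ[k] T₂ (tgt e)) :=
    LinearMap.pi fun e =>
      ((LinearMap.lcomp k (T₂ (tgt e)) (T₁f e)).comp (LinearMap.proj (tgt e)))
        - ((LinearMap.llcomp k (T₁ (src e)) (T₂ (src e)) (T₂ (tgt e)) (T₂f e)).comp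
            (LinearMap.proj (src e))) with hDdef
  have hD : ∀ (φ : ∀ p : V, T₁ p →ₗ[k] T₂ p) (e : E),
      D φ e = (φ (tgt e)).comp (T₁f e) - (T₂f e).comp (φ (src e)) := fun φ e => rfl
  have hker : homRep src tgt T₁ T₂ T₁f T₂f = LinearMap.ker D := by
    ext φ
    have h1 : φ ∈ homRep src tgt T₁ T₂ T₁f T₂f
        ↔ ∀ e : E, (φ (tgt e)).comp (T₁f e) = (T₂f e).comp (φ (src e)) := Iff.rfl
    rw [h1, LinearMap.mem_ker, funext_iff]
    simp only [hD, Pi.zero_apply, sub_eq_zero]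
  -- the isomorphism to the dual of the total hom space
  let ε : (∀ p : V, T₁ p ⊗[k] Module.Dual k (T₂ p)) ≃ₗ[k]
      Module.Dual k (∀ p : V, T₁ p →ₗ[k] T₂ p) :=
    (LinearEquiv.piCongrRight fun p => evalTensor (T₁ p) (T₂ p)).trans
      (LinearMap.lsum k (fun p => T₁ p →ₗ[k] T₂ p) k)
  have key : ∀ (p : V) (x : T₁ p ⊗[k] Module.Dual k (T₂ p))
      (φ : ∀ p : V, T₁ p →ₗ[k] T₂ p),
      ε (LinearMap.single k (fun p => T₁ p ⊗[k] Module.Dual k (T₂ p)) p x) φ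
        = evalTensor (T₁ p) (T₂ p) x (φ p) := by
    intro p x φ
    have h2 : ε (LinearMap.single k (fun p => T₁ p ⊗[k] Module.Dual k (T₂ p)) p x) φ
        = ∑ q, evalTensor (T₁ q) (T₂ q)
            ((Pi.single p x : ∀ q, T₁ q ⊗[k] Module.Dual k (T₂ q)) q) (φ q) := by
      simp [ε, LinearMap.lsum_apply, LinearMap.sum_apply, LinearEquiv.piCongrRight,
        LinearMap.coe_single]
      rfl
    rw [h2, Finset.sum_eq_single p]
    · rw [Pi.single_eq_same]
    · intro q _ hq
      rw [Pi.single_eq_of_ne hq, map_zero, LinearMap.zero_apply]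
    · intro h; exact absurd (Finset.mem_univ p) h
  -- the analogous isomorphism on edges
  let ε' : (∀ e : E, T₁ (src e) ⊗[k] Module.Dual k (T₂ (tgt e))) ≃ₗ[k]
      Module.Dual k (∀ e : E, T₁ (src e) →ₗ[k] T₂ (tgt e)) :=
    (LinearEquiv.piCongrRight fun e => evalTensor (T₁ (src e)) (T₂ (tgt e))).trans
      (LinearMap.lsum k (fun e => T₁ (src e) →ₗ[k] T₂ (tgt e)) k)
  have key' : ∀ (e : E) (x : T₁ (src e) ⊗[k] Module.Dual k (T₂ (tgt e)))
      (ψ : ∀ e : E, T₁ (src e) →ₗ[k] T₂ (tgt e)),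
      ε' (LinearMap.single k (fun e => T₁ (src e) ⊗[k] Module.Dual k (T₂ (tgt e))) e x) ψ
        = evalTensor (T₁ (src e)) (T₂ (tgt e)) x (ψ e) := by
    intro e x ψ
    have h2 : ε' (LinearMap.single k
          (fun e => T₁ (src e) ⊗[k] Module.Dual k (T₂ (tgt e))) e x) ψ
        = ∑ d, evalTensor (T₁ (src d)) (T₂ (tgt d))
            ((Pi.single e x : ∀ d, T₁ (src d) ⊗[k] Module.Dual k (T₂ (tgt d))) d) (ψ d) := by
      simp [ε', LinearMap.lsum_apply, LinearMap.sum_apply, LinearEquiv.piCongrRight,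
        LinearMap.coe_single]
      rfl
    rw [h2, Finset.sum_eq_single e]
    · rw [Pi.single_eq_same]
    · intro d _ hd
      rw [Pi.single_eq_of_ne hd, map_zero, LinearMap.zero_apply]
    · intro h; exact absurd (Finset.mem_univ e) h
  -- the unquotiented map
  let Φ : (∀ p : V, T₁ p ⊗[k] Module.Dual k (T₂ p)) →ₗ[k]
      Module.Dual k (homRep src tgt T₁ T₂ T₁f T₂f) :=
    ((homRep src tgt T₁ T₂ T₁f T₂f).dualRestrict).comp ε.toLinearMap
  have Φ_apply : ∀ (p : V) (ω : T₁ p) (γ : Module.Dual k (T₂ p))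
      (φ : homRep src tgt T₁ T₂ T₁f T₂f),
      Φ (LinearMap.single k (fun p => T₁ p ⊗[k] Module.Dual k (T₂ p)) p (ω ⊗ₜ[k] γ)) φ
        = γ (((φ : ∀ p : V, T₁ p →ₗ[k] T₂ p) p) ω) := by
    intro p ω γ φ
    have : Φ (LinearMap.single k (fun p => T₁ p ⊗[k] Module.Dual k (T₂ p)) p (ω ⊗ₜ[k] γ)) φ
        = ε (LinearMap.single k (fun p => T₁ p ⊗[k] Module.Dual k (T₂ p)) p (ω ⊗ₜ[k] γ))
            (φ : ∀ p : V, T₁ p →ₗ[k] T₂ p) := rfl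
    rw [this, key]
    exact evalTensor_apply (T₁ p) (T₂ p) ω γ _
  -- the relations lie in the kernel of Φ
  have hrel : relSub src tgt T₁ T₂ T₁f T₂f ≤ LinearMap.ker Φ := by
    rw [relSub, Submodule.span_le]
    rintro x ⟨e, ω, γ, rfl⟩
    simp only [SetLike.mem_coe, LinearMap.mem_ker]
    ext φ
    simp only [map_sub, LinearMap.sub_apply, LinearMap.zero_apply]
    rw [Φ_apply, Φ_apply]
    have hφ := φ.2 e
    have h3 := LinearMap.congr_fun hφ ω
    simp only [LinearMap.comp_apply] at h3 ⊢
    rw [h3]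
    exact sub_self _
  -- the induced map on the quotient
  refine ⟨(relSub src tgt T₁ T₂ T₁f T₂f).liftQ Φ hrel, ?_, ?_, ?_⟩
  · intro p ω γ φ
    rw [Submodule.liftQ_apply]
    exact Φ_apply p ω γ φ
  · -- injectivity
    rw [← LinearMap.ker_eq_bot]
    apply Submodule.ker_liftQ_eq_bot
    -- ker Φ ≤ relSub
    intro x hx
    have hx' : ε x ∈ LinearMap.range D.dualMap := by
      rw [LinearMap.range_dualMap_eq_dualAnnihilator_ker, ← hker]
      have : (homRep src tgt T₁ T₂ T₁f T₂f).dualRestrict (ε x) = 0 :=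
        LinearMap.mem_ker.mp hx
      exact LinearMap.mem_ker.mpr this
    obtain ⟨H, hH⟩ := hx'
    obtain ⟨y, rfl⟩ := ε'.surjective H
    have hxy : x = ε.symm (D.dualMap (ε' y)) := by
      rw [hH, LinearEquiv.symm_apply_apply]
    rw [hxy]
    -- it suffices to treat generators of the edge space
    have span_top : y ∈ Submodule.span k
        {z : ∀ e : E, T₁ (src e) ⊗[k] Module.Dual k (T₂ (tgt e)) |
          ∃ (e : E) (ω : T₁ (src e)) (γ : Module.Dual k (T₂ (tgt e))),
            z = LinearMap.single k
              (fun e => T₁ (src e) ⊗[k] Module.Dual k (T₂ (tgt e))) e (ω ⊗ₜ[k] γ)} := by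
      rw [← Finset.univ_sum_single y]
      apply Submodule.sum_mem
      intro e _
      suffices haux : ∀ t : T₁ (src e) ⊗[k] Module.Dual k (T₂ (tgt e)),
          Pi.single e t ∈ Submodule.span k
            {z : ∀ e : E, T₁ (src e) ⊗[k] Module.Dual k (T₂ (tgt e)) |
              ∃ (e : E) (ω : T₁ (src e)) (γ : Module.Dual k (T₂ (tgt e))),
                z = LinearMap.single k
                  (fun e => T₁ (src e) ⊗[k] Module.Dual k (T₂ (tgt e))) e (ω ⊗ₜ[k] γ)} by
        exact haux (y e)
      intro t
      have hmem : t ∈ (⊤ : Submodule k (T₁ (src e) ⊗[k] Module.Dual k (T₂ (tgt e)))) :=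
        trivial
      rw [← TensorProduct.span_tmul_eq_top k] at hmem
      induction hmem using Submodule.span_induction with
      | mem t ht =>
        obtain ⟨m, n, rfl⟩ := ht
        exact Submodule.subset_span ⟨e, m, n, by rw [LinearMap.coe_single]⟩
      | zero => rw [Pi.single_zero]; exact Submodule.zero_mem _
      | add a b _ _ ha hb => rw [Pi.single_add]; exact Submodule.add_mem _ ha hb
      | smul c a _ ha => rw [Pi.single_smul]; exact Submodule.smul_mem _ c ha
    clear hxy hH hx
    induction span_top using Submodule.span_induction with
    | mem z hz =>
      obtain ⟨e, ω, γ, rfl⟩ := hz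
      have hEq : D.dualMap (ε' (LinearMap.single k
            (fun e => T₁ (src e) ⊗[k] Module.Dual k (T₂ (tgt e))) e (ω ⊗ₜ[k] γ)))
          = ε (LinearMap.single k (fun p => T₁ p ⊗[k] Module.Dual k (T₂ p)) (tgt e)
                ((T₁f e ω) ⊗ₜ[k] γ)
              - LinearMap.single k (fun p => T₁ p ⊗[k] Module.Dual k (T₂ p)) (src e)
                (ω ⊗ₜ[k] (γ ∘ₗ T₂f e))) := by
        refine LinearMap.ext fun φ => ?_
        rw [map_sub, LinearMap.sub_apply]
        rw [LinearMap.dualMap_apply, key', key, key]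
        rw [evalTensor_apply, evalTensor_apply, evalTensor_apply]
        rw [hD]
        simp only [LinearMap.sub_apply, LinearMap.comp_apply, map_sub]
      rw [hEq, LinearEquiv.symm_apply_apply]
      exact Submodule.subset_span ⟨e, ω, γ, rfl⟩
    | zero => simp only [map_zero]; exact Submodule.zero_mem _
    | add a b _ _ ha hb => simp only [map_add]; exact Submodule.add_mem _ ha hb
    | smul c a _ ha => simp only [map_smul]; exact Submodule.smul_mem _ c ha
  · -- surjectivity
    intro y
    have hsurj : Function.Surjective Φ := by
      have h1 : Function.Surjective (homRep src tgt T₁ T₂ T₁f T₂f).dualRestrict :=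
        (Subspace.dualRestrict_leftInverse (homRep src tgt T₁ T₂ T₁f T₂f)).surjective
      exact h1.comp ε.surjective
    obtain ⟨x, hx⟩ := hsurj y
    exact ⟨Submodule.Quotient.mk x, by rwa [Submodule.liftQ_apply]⟩

end
end

section
/- Let R be a commutative ring, S a flat commutative R-algebra, and Q a quiver with finitely many vertices and finitely many edges. Let T be a representation of Q assigning to each vertex p a finitely generated projective R-module T(p) and to each edge f : p → p' an R-linear map T(f) : T(p) → T(p'). Define End(T) := {(e_p)_p ∈ ∏_p End_R(T(p)) : e_{p'} ∘ T(f) = T(f) ∘ e_p for every edge f : p → p'}, and let T ⊗ S be the representation over S with (T ⊗ S)(p) = T(p) ⊗_R S and (T ⊗ S)(f) = T(f) ⊗ id_S. Then the natural S-linear map End(T) ⊗_R S → End(T ⊗ S) (induced by (e_p)_p ⊗ s ↦ (s·(e_p ⊗ id_S))_p) is bijective. -/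
open TensorProduct

section HomBC

variable {R S : Type*} [CommRing R] [CommRing S] [Algebra R S]
variable {M M' N : Type*} [AddCommGroup M] [Module R M] [AddCommGroup M'] [Module R M']
  [AddCommGroup N] [Module R N]

lemma tp_tmul (s : S) (f : M →ₗ[R] N) :
    LinearMap.tensorProduct R S M N (s ⊗ₜ f) = s • f.baseChange S := by
  simp [LinearMap.tensorProduct]

lemma tp_naturality (g : M →ₗ[R] M') (x : S ⊗[R] (M' →ₗ[R] N)) :
    LinearMap.tensorProduct R S M N (((g.lcomp R N)).baseChange S x)
      = (LinearMap.tensorProduct R S M' N x).comp (g.baseChange S) := by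
  induction x using TensorProduct.induction_on with
  | zero => simp
  | tmul s f =>
      rw [LinearMap.baseChange_tmul, tp_tmul, tp_tmul]
      simp only [LinearMap.lcomp_apply']
      rw [LinearMap.baseChange_comp, LinearMap.smul_comp]
  | add x y hx hy => simp [map_add, hx, hy, LinearMap.add_comp]


lemma tp_smulRight_eval (ι : Type*) [Fintype ι] (i : ι) (y : S ⊗[R] N) (t : S) (v : ι → R) :
    LinearMap.tensorProduct R S (ι → R) N
      (((LinearMap.smulRightₗ (LinearMap.proj i : (ι → R) →ₗ[R] R)).baseChange S y)) (t ⊗ₜ v)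
      = v i • (t • y) := by
  induction y using TensorProduct.induction_on with
  | zero => simp
  | tmul s n =>
      rw [LinearMap.baseChange_tmul, tp_tmul]
      simp only [LinearMap.smul_apply, LinearMap.baseChange_tmul, LinearMap.smulRightₗ_apply,
        LinearMap.smulRight_apply, LinearMap.proj_apply]
      rw [smul_tmul', smul_tmul', smul_tmul', tmul_smul]
      simp only [smul_eq_mul]
      rw [mul_comm s t, smul_tmul']
  | add y₁ y₂ h₁ h₂ => simp only [map_add, LinearMap.add_apply, h₁, h₂, smul_add]

lemma tp_bijective_free (ι : Type*) [Fintype ι] [DecidableEq ι] :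
    Function.Bijective (LinearMap.tensorProduct R S (ι → R) N) := by
  classical
  set τ := LinearMap.tensorProduct R S (ι → R) N with hτ
  let inv : ((S ⊗[R] (ι → R)) →ₗ[S] S ⊗[R] N) → S ⊗[R] ((ι → R) →ₗ[R] N) := fun φ =>
    ∑ i : ι, (LinearMap.smulRightₗ (LinearMap.proj i : (ι → R) →ₗ[R] R)).baseChange S
      (φ ((1 : S) ⊗ₜ Pi.single i 1))
  have hleft : ∀ x, inv (τ x) = x := by
    intro x
    induction x using TensorProduct.induction_on with
    | zero => simp [inv]
    | tmul s f =>
        simp only [inv, hτ, tp_tmul, LinearMap.smul_apply, LinearMap.baseChange_tmul, map_smul]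
        rw [← Finset.smul_sum, ← tmul_sum, smul_tmul', smul_eq_mul, mul_one]
        congr 1
        ext v
        simp only [LinearMap.coe_comp, Function.comp_apply, LinearMap.single_apply,
          LinearMap.coe_sum, Finset.sum_apply, LinearMap.smulRightₗ_apply,
          LinearMap.smulRight_apply, LinearMap.proj_apply]
        have hps : ∀ a : ι, (Pi.single a (1:R) : ι → R) = fun j => if a = j then 1 else 0 := by
          intro a; ext j; simp [Pi.single_apply, eq_comm]
        simp_rw [hps]
        exact (LinearMap.pi_apply_eq_sum_univ f _).symm
    | add x y hx hy =>
        simp only [inv, map_add, LinearMap.add_apply, Finset.sum_add_distrib] at *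
        rw [hx, hy]
  have hright : ∀ φ, τ (inv φ) = φ := by
    intro φ
    apply LinearMap.ext
    intro z
    induction z using TensorProduct.induction_on with
    | zero => simp
    | tmul t v =>
        have hτv : (τ (inv φ)) (t ⊗ₜ v) = ∑ i : ι, v i • (t • φ ((1:S) ⊗ₜ Pi.single i 1)) := by
          simp only [inv, map_sum, LinearMap.coe_sum, Finset.sum_apply]
          exact Finset.sum_congr rfl fun i _ => tp_smulRight_eval ι i _ t v
        have hv : (t ⊗ₜ v : S ⊗[R] (ι → R))
            = ∑ i : ι, v i • (t • ((1:S) ⊗ₜ (Pi.single i 1 : ι → R))) := by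
          have h1 : ∀ i : ι, v i • (t • ((1:S) ⊗ₜ[R] (Pi.single i 1 : ι → R)))
              = t • ((1:S) ⊗ₜ[R] (Pi.single i (v i) : ι → R)) := by
            intro i
            rw [smul_comm, ← tmul_smul]
            congr 2
            ext j
            simp [Pi.single_apply]
          rw [Finset.sum_congr rfl fun i _ => h1 i, ← Finset.smul_sum, ← tmul_sum,
            Finset.univ_sum_single, smul_tmul', smul_eq_mul, mul_one]
        rw [hτv]
        conv_rhs => rw [hv]
        rw [map_sum]
        refine Finset.sum_congr rfl fun i _ => ?_
        rw [LinearMap.map_smul_of_tower, LinearMap.map_smul]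
    | add a b ha hb => rw [map_add, map_add, ha, hb]
  constructor
  · intro x y h
    rw [← hleft x, ← hleft y, h]
  · intro φ
    exact ⟨inv φ, hright φ⟩


lemma tp_bijective (M N : Type*) [AddCommGroup M] [Module R M] [AddCommGroup N] [Module R N]
    [Module.Projective R M] [Module.Finite R M] :
    Function.Bijective (LinearMap.tensorProduct R S M N) := by
  obtain ⟨n, π, hπ⟩ := Module.Finite.exists_fin' R M
  obtain ⟨σ, hσ⟩ := Module.projective_lifting_property π LinearMap.id hπ
  have hfree := tp_bijective_free (R := R) (S := S) (N := N) (Fin n)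
  have hcomp : (σ.lcomp R N).comp (π.lcomp R N) = LinearMap.id := by
    ext f x
    have hx : π (σ x) = x := by
      have := LinearMap.congr_fun hσ x
      simpa using this
    simp [LinearMap.lcomp_apply, hx]
  have h3 : ((σ.lcomp R N).baseChange S).comp ((π.lcomp R N).baseChange S) = LinearMap.id := by
    rw [← LinearMap.baseChange_comp, hcomp, LinearMap.baseChange_id]
  constructor
  · rw [injective_iff_map_eq_zero]
    intro x hx
    have h1 : LinearMap.tensorProduct R S (Fin n → R) N ((π.lcomp R N).baseChange S x) = 0 := by
      rw [tp_naturality, hx, LinearMap.zero_comp]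
    have h2 : (π.lcomp R N).baseChange S x = 0 := by
      apply hfree.injective
      rw [h1, map_zero]
    have h4 := LinearMap.congr_fun h3 x
    simp only [LinearMap.coe_comp, Function.comp_apply, LinearMap.id_coe, id_eq] at h4
    rw [← h4, h2, map_zero]
  · intro φ
    obtain ⟨y, hy⟩ := hfree.surjective (φ.comp (π.baseChange S))
    refine ⟨(σ.lcomp R N).baseChange S y, ?_⟩
    rw [tp_naturality, hy, LinearMap.comp_assoc, ← LinearMap.baseChange_comp, hσ,
      LinearMap.baseChange_id, LinearMap.comp_id]

end HomBC

section

variable {R S : Type*} [CommRing R] [CommRing S] [Algebra R S] [Module.Flat R S]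
variable {V E : Type*} [Fintype V] [Fintype E]
variable (src tgt : E → V)
variable (T : V → Type*)
variable [∀ p, AddCommGroup (T p)] [∀ p, Module R (T p)]
variable [∀ p, Module.Projective R (T p)] [∀ p, Module.Finite R (T p)]
variable (Tf : ∀ e : E, T (src e) →ₗ[R] T (tgt e))

/-- `End(T)`: the `R`-module of families `(e_p)_p` of endomorphisms commuting with
all the edge maps of the representation `T`. -/
def endRep : Submodule R (∀ p : V, T p →ₗ[R] T p) where
  carrier := {a | ∀ e : E, (a (tgt e)).comp (Tf e) = (Tf e).comp (a (src e))}
  add_mem' := by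
    intro a b ha hb e
    simp only [Pi.add_apply, LinearMap.add_comp, LinearMap.comp_add, ha e, hb e]
  zero_mem' := by
    intro e
    simp only [Pi.zero_apply, LinearMap.zero_comp, LinearMap.comp_zero]
  smul_mem' := by
    intro c a ha e
    simp only [Pi.smul_apply, LinearMap.smul_comp, LinearMap.comp_smul, ha e]

/-- `End(T ⊗ S)`: the `S`-module of families of endomorphisms of the base-changed
representation `T ⊗ S` (with spaces `S ⊗[R] T p` and edge maps `T(f) ⊗ id_S`)
commuting with all the edge maps. -/
noncomputable def endRepS : Submodule S (∀ p : V, (S ⊗[R] T p) →ₗ[S] (S ⊗[R] T p)) where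
  carrier :=
    {a | ∀ e : E, (a (tgt e)).comp ((Tf e).baseChange S) = ((Tf e).baseChange S).comp (a (src e))}
  add_mem' := by
    intro a b ha hb e
    simp only [Pi.add_apply, LinearMap.add_comp, LinearMap.comp_add, ha e, hb e]
  zero_mem' := by
    intro e
    simp only [Pi.zero_apply, LinearMap.zero_comp, LinearMap.comp_zero]
  smul_mem' := by
    intro c a ha e
    simp only [Pi.smul_apply, LinearMap.smul_comp, LinearMap.comp_smul, ha e]

def psiAux : (∀ p : V, T p →ₗ[R] T p) →ₗ[R] (∀ e : E, T (src e) →ₗ[R] T (tgt e)) where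
  toFun a := fun e => (a (tgt e)).comp (Tf e) - (Tf e).comp (a (src e))
  map_add' a b := by
    funext e
    simp only [Pi.add_apply, LinearMap.add_comp, LinearMap.comp_add]
    abel
  map_smul' c a := by
    funext e
    simp only [Pi.smul_apply, LinearMap.smul_comp, LinearMap.comp_smul, smul_sub,
      RingHom.id_apply]

noncomputable def psiSAux :
    (∀ p : V, (S ⊗[R] T p) →ₗ[S] S ⊗[R] T p) →ₗ[S]
      (∀ e : E, (S ⊗[R] T (src e)) →ₗ[S] S ⊗[R] T (tgt e)) where
  toFun a := fun e =>
    (a (tgt e)).comp ((Tf e).baseChange S) - ((Tf e).baseChange S).comp (a (src e))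
  map_add' a b := by
    funext e
    simp only [Pi.add_apply, LinearMap.add_comp, LinearMap.comp_add]
    abel
  map_smul' c a := by
    funext e
    simp only [Pi.smul_apply, LinearMap.smul_comp, LinearMap.comp_smul, smul_sub,
      RingHom.id_apply]
    exact (smul_sub c ((a (tgt e)).comp ((Tf e).baseChange S)) (((Tf e).baseChange S).comp (a (src e)))).symm

lemma mem_endRep_iff (a : ∀ p : V, T p →ₗ[R] T p) :
    a ∈ endRep src tgt T Tf ↔ psiAux src tgt T Tf a = 0 := by
  constructor
  · intro h
    funext e
    show (a (tgt e)).comp (Tf e) - (Tf e).comp (a (src e)) = 0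
    rw [h e, sub_self]
  · intro h e
    have := congr_fun h e
    simpa [psiAux, sub_eq_zero] using this

lemma mem_endRepS_iff (a : ∀ p : V, (S ⊗[R] T p) →ₗ[S] S ⊗[R] T p) :
    a ∈ endRepS src tgt T Tf ↔ psiSAux src tgt T Tf a = 0 := by
  constructor
  · intro h
    funext e
    show (a (tgt e)).comp ((Tf e).baseChange S) - ((Tf e).baseChange S).comp (a (src e)) = 0
    rw [h e]; exact sub_self (((Tf e).baseChange S).comp (a (src e)))
  · intro h e
    have := congr_fun h e
    exact sub_eq_zero.mp (by simpa [psiSAux] using this)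

noncomputable def eOne :
    (S ⊗[R] (∀ p : V, T p →ₗ[R] T p)) ≃ₗ[S] (∀ p : V, (S ⊗[R] T p) →ₗ[S] S ⊗[R] T p) :=
  letI := Classical.decEq V
  (TensorProduct.piRight R S S fun p => T p →ₗ[R] T p).trans
    (LinearEquiv.piCongrRight fun p =>
      LinearEquiv.ofBijective (LinearMap.tensorProduct R S (T p) (T p))
        (tp_bijective (T p) (T p)))

noncomputable def eTwo :
    (S ⊗[R] (∀ e : E, T (src e) →ₗ[R] T (tgt e))) ≃ₗ[S]
      (∀ e : E, (S ⊗[R] T (src e)) →ₗ[S] S ⊗[R] T (tgt e)) :=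
  letI := Classical.decEq E
  (TensorProduct.piRight R S S fun e => T (src e) →ₗ[R] T (tgt e)).trans
    (LinearEquiv.piCongrRight fun e =>
      LinearEquiv.ofBijective (LinearMap.tensorProduct R S (T (src e)) (T (tgt e)))
        (tp_bijective (T (src e)) (T (tgt e))))

lemma eOne_tmul (s : S) (a : ∀ p : V, T p →ₗ[R] T p) (p : V) :
    eOne T (s ⊗ₜ[R] a) p = s • (a p).baseChange S := by
  simp only [eOne, LinearEquiv.trans_apply, TensorProduct.piRight_apply,
    TensorProduct.piRightHom_tmul, LinearEquiv.piCongrRight_apply,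
    LinearEquiv.ofBijective_apply]
  rw [tp_tmul]

lemma eTwo_tmul (s : S) (b : ∀ e : E, T (src e) →ₗ[R] T (tgt e)) (e : E) :
    eTwo src tgt T (s ⊗ₜ[R] b) e = s • (b e).baseChange S := by
  simp only [eTwo, LinearEquiv.trans_apply, TensorProduct.piRight_apply,
    TensorProduct.piRightHom_tmul, LinearEquiv.piCongrRight_apply,
    LinearEquiv.ofBijective_apply]
  rw [tp_tmul]

set_option synthInstance.maxHeartbeats 800000 in
set_option maxHeartbeats 1000000 in
lemma comm_sq (x : S ⊗[R] (∀ p : V, T p →ₗ[R] T p)) :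
    eTwo src tgt T ((psiAux src tgt T Tf).baseChange S x)
      = psiSAux src tgt T Tf (eOne T x) := by
  induction x using TensorProduct.induction_on with
  | zero => simp only [map_zero]
  | tmul s a =>
      funext e
      rw [LinearMap.baseChange_tmul, eTwo_tmul]
      show s • (((a (tgt e)).comp (Tf e) - (Tf e).comp (a (src e))).baseChange S)
        = (eOne T (s ⊗ₜ[R] a) (tgt e)).comp ((Tf e).baseChange S)
          - ((Tf e).baseChange S).comp (eOne T (s ⊗ₜ[R] a) (src e))
      rw [eOne_tmul, eOne_tmul, LinearMap.baseChange_sub, LinearMap.baseChange_comp,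
        LinearMap.baseChange_comp]
      simp only [LinearMap.smul_comp, LinearMap.comp_smul]
      ext z
      simp [smul_sub]
  | add x y hx hy => rw [map_add, map_add, hx, hy, map_add, map_add]

lemma exact0 : Function.Exact (endRep src tgt T Tf).subtype (psiAux src tgt T Tf) := by
  intro a
  constructor
  · intro h
    exact ⟨⟨a, (mem_endRep_iff src tgt T Tf a).mpr h⟩, rfl⟩
  · rintro ⟨⟨b, hb⟩, rfl⟩
    exact (mem_endRep_iff src tgt T Tf b).mp hb

lemma exactS :
    Function.Exact ((endRep src tgt T Tf).subtype.baseChange S)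
      ((psiAux src tgt T Tf).baseChange S) := by
  have h := Module.Flat.lTensor_exact S (exact0 src tgt T Tf)
  rwa [← LinearMap.baseChange_eq_ltensor, ← LinearMap.baseChange_eq_ltensor] at h

lemma inj_base :
    Function.Injective ((endRep src tgt T Tf).subtype.baseChange S) := by
  have h := Module.Flat.lTensor_preserves_injective_linearMap (M := S)
    (endRep src tgt T Tf).subtype (Submodule.injective_subtype _)
  rwa [← LinearMap.baseChange_eq_ltensor] at h

lemma psi_comp_subtype :
    (psiAux src tgt T Tf) ∘ₗ (endRep src tgt T Tf).subtype = 0 := by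
  apply LinearMap.ext
  intro a
  simpa using (mem_endRep_iff src tgt T Tf a.1).mp a.2

/-- Let `R` be a commutative ring, `S` a flat commutative `R`-algebra
and `T` a representation of a finite quiver on finitely generated projective
`R`-modules. Then the natural `S`-linear map
`End(T) ⊗_R S → End(T ⊗ S)`, induced by `(e_p)_p ⊗ s ↦ (s · (e_p ⊗ id_S))_p`,
is bijective. -/
theorem endRep_baseChange_bijective :
    ∃ Φ : (S ⊗[R] (endRep src tgt T Tf)) →ₗ[S] (endRepS src tgt T Tf),
      (∀ (s : S) (a : endRep src tgt T Tf) (p : V),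
        ((Φ (s ⊗ₜ[R] a)).val p)
          = s • ((a : ∀ p : V, T p →ₗ[R] T p) p).baseChange S) ∧
      Function.Bijective Φ := by

  classical
  have hmemS : ∀ x : S ⊗[R] (endRep src tgt T Tf),
      eOne T ((endRep src tgt T Tf).subtype.baseChange S x) ∈ endRepS src tgt T Tf := by
    intro x
    have hc : ((psiAux src tgt T Tf).baseChange S).comp
        ((endRep src tgt T Tf).subtype.baseChange S) = 0 := by
      rw [← LinearMap.baseChange_comp, psi_comp_subtype, LinearMap.baseChange_zero]
    have h0 : (psiAux src tgt T Tf).baseChange S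
        ((endRep src tgt T Tf).subtype.baseChange S x) = 0 := by
      have := LinearMap.congr_fun hc x
      simpa using this
    rw [mem_endRepS_iff, ← comm_sq, h0, map_zero]
  refine ⟨LinearMap.codRestrict (endRepS src tgt T Tf)
    ((eOne T).toLinearMap ∘ₗ (endRep src tgt T Tf).subtype.baseChange S) hmemS, ?_, ?_, ?_⟩
  · intro s a p
    show eOne T ((endRep src tgt T Tf).subtype.baseChange S (s ⊗ₜ[R] a)) p = _
    rw [LinearMap.baseChange_tmul]
    exact eOne_tmul T s a.1 p
  · intro x y h
    have h' : eOne T ((endRep src tgt T Tf).subtype.baseChange S x)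
        = eOne T ((endRep src tgt T Tf).subtype.baseChange S y) := congrArg Subtype.val h
    exact inj_base src tgt T Tf ((eOne T).injective h')
  · intro b
    have hb : psiSAux src tgt T Tf b.1 = 0 := (mem_endRepS_iff src tgt T Tf b.1).mp b.2
    have h1 : (psiAux src tgt T Tf).baseChange S ((eOne T).symm b.1) = 0 := by
      apply (eTwo src tgt T).injective
      rw [comm_sq, (eOne T).apply_symm_apply, hb, map_zero]
    obtain ⟨x, hx⟩ := (exactS src tgt T Tf ((eOne T).symm b.1)).mp h1
    refine ⟨x, Subtype.ext ?_⟩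
    show eOne T ((endRep src tgt T Tf).subtype.baseChange S x) = b.1
    rw [hx, (eOne T).apply_symm_apply]


end
end
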